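/- arXiv:1403.5095 — 2 statements merged into one kernel-verified Lean document; each statement's English description precedes it below -/
import Mathlib

section
/- For functors L: A → B and R: B → A, (L, R) admits regular pairings (L, R, α, β) and (R, L, α̃, β̃) with splitting idempotents satisfying ℓ = ℓ̃ and r = r̃ if and only if there exist retractions underline{L} →i L →p underline{L} and underline{R} →i' R →p' underline{R} such that (underline{L}, underline{R}) is a Frobenius pair of functors (i.e., underline{L} is left and right adjoint to underline{R}). -/
open CategoryTheory

universe v₁ u₁ v₂ u₂

section

variable {A : Type u₁} [Category.{v₁} A] {B : Type u₂} [Category.{v₂} B]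
variable (L : A ⥤ B) (R : B ⥤ A)

def pairingAlpha (η : 𝟭 A ⟶ L ⋙ R) {X : A} {Y : B} (f : L.obj X ⟶ Y) : X ⟶ R.obj Y :=
  η.app X ≫ R.map f

def pairingBeta (ε : R ⋙ L ⟶ 𝟭 B) {X : A} {Y : B} (g : X ⟶ R.obj Y) : L.obj X ⟶ Y :=
  L.map g ≫ ε.app Y

/-- The map `α̃ : Mor_A(R Y, X) → Mor_B(Y, L X)` of the opposite pairing, from `η̃`. -/
def pairingAlphaT (ηt : 𝟭 B ⟶ R ⋙ L) {Y : B} {X : A} (f : R.obj Y ⟶ X) : Y ⟶ L.obj X :=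
  ηt.app Y ≫ L.map f

/-- The map `β̃ : Mor_B(Y, L X) → Mor_A(R Y, X)` of the opposite pairing, from `ε̃`. -/
def pairingBetaT (εt : L ⋙ R ⟶ 𝟭 A) {Y : B} {X : A} (g : Y ⟶ L.obj X) : R.obj Y ⟶ X :=
  R.map g ≫ εt.app X

/-- `ℓ := εL·Lη`. -/
def pairingEll (η : 𝟭 A ⟶ L ⋙ R) (ε : R ⋙ L ⟶ 𝟭 B) (X : A) : L.obj X ⟶ L.obj X :=
  L.map (η.app X) ≫ ε.app (L.obj X)

/-- `r := Rε·ηR`. -/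
def pairingR (η : 𝟭 A ⟶ L ⋙ R) (ε : R ⋙ L ⟶ 𝟭 B) (Y : B) : R.obj Y ⟶ R.obj Y :=
  η.app (R.obj Y) ≫ R.map (ε.app Y)

/-- `ℓ̃ := Lε̃·η̃L`. -/
def pairingEllT (ηt : 𝟭 B ⟶ R ⋙ L) (εt : L ⋙ R ⟶ 𝟭 A) (X : A) : L.obj X ⟶ L.obj X :=
  ηt.app (L.obj X) ≫ L.map (εt.app X)

/-- `r̃ := ε̃R·Rη̃`. -/
def pairingRT (ηt : 𝟭 B ⟶ R ⋙ L) (εt : L ⋙ R ⟶ 𝟭 A) (Y : B) : R.obj Y ⟶ R.obj Y :=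
  R.map (ηt.app Y) ≫ εt.app (R.obj Y)

/-- A split regular pairing induces an adjunction between the retracts. -/
theorem auxAdj (η : 𝟭 A ⟶ L ⋙ R) (ε : R ⋙ L ⟶ 𝟭 B)
    (hE1 : ∀ X : A, η.app X ≫ R.map (L.map (η.app X) ≫ ε.app (L.obj X)) = η.app X)
    (hE2 : ∀ Y : B, L.map (η.app (R.obj Y) ≫ R.map (ε.app Y)) ≫ ε.app Y = ε.app Y)
    (L' : A ⥤ B) (pL : L ⟶ L') (iL : L' ⟶ L)
    (hL1 : ∀ X, pL.app X ≫ iL.app X = L.map (η.app X) ≫ ε.app (L.obj X))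
    (hL2 : ∀ X, iL.app X ≫ pL.app X = 𝟙 (L'.obj X))
    (R' : B ⥤ A) (pR : R ⟶ R') (iR : R' ⟶ R)
    (hR1 : ∀ Y, pR.app Y ≫ iR.app Y = η.app (R.obj Y) ≫ R.map (ε.app Y))
    (hR2 : ∀ Y, iR.app Y ≫ pR.app Y = 𝟙 (R'.obj Y)) :
    Nonempty (L' ⊣ R') := by
  refine ⟨Adjunction.mkOfUnitCounit
    { unit :=
      { app := fun X => η.app X ≫ pR.app (L.obj X) ≫ R'.map (pL.app X)
        naturality := ?_ }
      counit :=
      { app := fun Y => L'.map (iR.app Y) ≫ iL.app (R.obj Y) ≫ ε.app Y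
        naturality := ?_ }
      left_triangle := ?_
      right_triangle := ?_ }⟩
  · intro X X' f
    simp only [Functor.id_map, Functor.comp_map, Category.assoc]
    rw [reassoc_of% (show f ≫ η.app X' = η.app X ≫ R.map (L.map f) from by
        simpa using η.naturality f),
      pR.naturality_assoc, ← Functor.map_comp, pL.naturality, Functor.map_comp]
  · intro Y Y' f
    simp only [Functor.id_map, Functor.comp_map, Category.assoc]
    rw [show ε.app Y ≫ f = L.map (R.map f) ≫ ε.app Y' from by simpa using (ε.naturality f).symm,
      ← iL.naturality_assoc, ← Functor.map_comp_assoc, ← Functor.map_comp_assoc, iR.naturality]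
  · ext X
    simp only [Functor.comp_obj, Functor.id_obj, NatTrans.comp_app, Functor.whiskerRight_app,
      Functor.associator_hom_app, Functor.whiskerLeft_app, NatTrans.id_app, Category.id_comp,
      Category.comp_id, Functor.map_comp, Category.assoc]
    slice_lhs 3 4 => rw [← Functor.map_comp,
      show R'.map (pL.app X) ≫ iR.app (L'.obj X) = iR.app (L.obj X) ≫ R.map (pL.app X) from
        iR.naturality _, Functor.map_comp]
    slice_lhs 4 5 => rw [show L'.map (R.map (pL.app X)) ≫ iL.app (R.obj (L'.obj X)) =
        iL.app (R.obj (L.obj X)) ≫ L.map (R.map (pL.app X)) from iL.naturality _]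
    slice_lhs 5 6 => rw [show L.map (R.map (pL.app X)) ≫ ε.app (L'.obj X) =
        ε.app (L.obj X) ≫ pL.app X from ε.naturality _]
    slice_lhs 2 3 => rw [← Functor.map_comp, hR1]
    slice_lhs 2 3 => rw [show L'.map (η.app (R.obj (L.obj X)) ≫ R.map (ε.app (L.obj X))) ≫
          iL.app (R.obj (L.obj X)) =
        iL.app (R.obj (L.obj X)) ≫ L.map (η.app (R.obj (L.obj X)) ≫ R.map (ε.app (L.obj X))) from
        iL.naturality _]
    slice_lhs 3 4 => rw [hE2]
    slice_lhs 1 2 => rw [show L'.map (η.app X) ≫ iL.app (R.obj (L.obj X)) =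
        iL.app X ≫ L.map (η.app X) from iL.naturality _]
    slice_lhs 2 3 => rw [← hL1]
    have h2 := hL2 X
    slice_lhs 1 2 => rw [h2]
    simp [hL2]
  · ext Y
    simp only [Functor.comp_obj, Functor.id_obj, NatTrans.comp_app, Functor.whiskerRight_app,
      Functor.associator_inv_app, Functor.whiskerLeft_app, NatTrans.id_app, Category.id_comp,
      Category.comp_id, Functor.map_comp, Category.assoc]
    slice_lhs 3 4 => rw [← Functor.map_comp,
      show pL.app (R'.obj Y) ≫ L'.map (iR.app Y) = L.map (iR.app Y) ≫ pL.app (R.obj Y) from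
        (pL.naturality _).symm, Functor.map_comp]
    slice_lhs 4 5 => rw [← Functor.map_comp, hL1]
    slice_lhs 2 3 => rw [show pR.app (L.obj (R'.obj Y)) ≫ R'.map (L.map (iR.app Y)) =
        R.map (L.map (iR.app Y)) ≫ pR.app (L.obj (R.obj Y)) from (pR.naturality _).symm]
    slice_lhs 1 2 => rw [show η.app (R'.obj Y) ≫ R.map (L.map (iR.app Y)) =
        iR.app Y ≫ η.app (R.obj Y) from by simpa using (η.naturality (iR.app Y)).symm]
    slice_lhs 3 4 => rw [show pR.app (L.obj (R.obj Y)) ≫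
          R'.map (L.map (η.app (R.obj Y)) ≫ ε.app (L.obj (R.obj Y))) =
        R.map (L.map (η.app (R.obj Y)) ≫ ε.app (L.obj (R.obj Y))) ≫ pR.app (L.obj (R.obj Y)) from
        (pR.naturality _).symm]
    slice_lhs 2 3 => rw [hE1]
    slice_lhs 3 4 => rw [show pR.app (L.obj (R.obj Y)) ≫ R'.map (ε.app Y) =
        R.map (ε.app Y) ≫ pR.app Y from (pR.naturality _).symm]
    slice_lhs 2 3 => rw [← hR1]
    have h2 := hR2 Y
    slice_lhs 1 2 => rw [h2]
    simp [hR2]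

/-- The unit `R iL ∘ iR L' ∘ unit` of the pairing induced by an adjunction of retracts. -/
@[simps] def auxUnit (L' : A ⥤ B) (R' : B ⥤ A)
    (adj : L' ⊣ R') (iL : L' ⟶ L) (iR : R' ⟶ R) : 𝟭 A ⟶ L ⋙ R where
  app X := adj.unit.app X ≫ iR.app (L'.obj X) ≫ R.map (iL.app X)
  naturality X X' f := by
    simp only [Functor.id_map, Functor.comp_map, Category.assoc]
    rw [reassoc_of% (show f ≫ adj.unit.app X' = adj.unit.app X ≫ R'.map (L'.map f) from by
        simpa using adj.unit.naturality f),
      iR.naturality_assoc, ← Functor.map_comp, iL.naturality, Functor.map_comp]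

/-- The counit `counit ∘ L' pR ∘ pL R` of the pairing induced by an adjunction of retracts. -/
@[simps] def auxCounit (L' : A ⥤ B) (R' : B ⥤ A)
    (adj : L' ⊣ R') (pL : L ⟶ L') (pR : R ⟶ R') : R ⋙ L ⟶ 𝟭 B where
  app Y := pL.app (R.obj Y) ≫ L'.map (pR.app Y) ≫ adj.counit.app Y
  naturality Y Y' f := by
    simp only [Functor.id_map, Functor.comp_map, Category.assoc]
    rw [show adj.counit.app Y ≫ f = L'.map (R'.map f) ≫ adj.counit.app Y' from by
        simpa using (adj.counit.naturality f).symm,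
      ← Functor.map_comp_assoc, ← pR.naturality, Functor.map_comp_assoc, ← pL.naturality_assoc,
      ← Functor.map_comp_assoc, pL.naturality_assoc, Functor.map_comp_assoc]

theorem auxEll (L' : A ⥤ B) (R' : B ⥤ A)
    (adj : L' ⊣ R') (pL : L ⟶ L') (iL : L' ⟶ L) (pR : R ⟶ R') (iR : R' ⟶ R)
    (hiR : ∀ Y, iR.app Y ≫ pR.app Y = 𝟙 (R'.obj Y)) (X : A) :
    L.map ((auxUnit L R L' R' adj iL iR).app X) ≫
      (auxCounit L R L' R' adj pL pR).app (L.obj X) = pL.app X ≫ iL.app X := by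
  simp only [auxUnit_app, auxCounit_app, Functor.map_comp, Category.assoc]
  slice_lhs 3 4 => rw [show L.map (R.map (iL.app X)) ≫ pL.app (R.obj (L.obj X)) =
      pL.app (R.obj (L'.obj X)) ≫ L'.map (R.map (iL.app X)) from pL.naturality _]
  slice_lhs 4 5 => rw [← Functor.map_comp,
    show R.map (iL.app X) ≫ pR.app (L.obj X) = pR.app (L'.obj X) ≫ R'.map (iL.app X) from
      pR.naturality _, Functor.map_comp]
  slice_lhs 5 6 => rw [show L'.map (R'.map (iL.app X)) ≫ adj.counit.app (L.obj X) =
      adj.counit.app (L'.obj X) ≫ iL.app X from adj.counit.naturality _]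
  slice_lhs 2 3 => rw [show L.map (iR.app (L'.obj X)) ≫ pL.app (R.obj (L'.obj X)) =
      pL.app (R'.obj (L'.obj X)) ≫ L'.map (iR.app (L'.obj X)) from pL.naturality _]
  slice_lhs 3 4 => rw [← Functor.map_comp, hiR, CategoryTheory.Functor.map_id]
  simp only [Category.id_comp, Category.comp_id, Category.assoc]
  slice_lhs 1 2 => rw [show L.map (adj.unit.app X) ≫ pL.app (R'.obj (L'.obj X)) =
      pL.app X ≫ L'.map (adj.unit.app X) from pL.naturality _]
  slice_lhs 2 3 => rw [adj.left_triangle_components]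
  simp

theorem auxR (L' : A ⥤ B) (R' : B ⥤ A)
    (adj : L' ⊣ R') (pL : L ⟶ L') (iL : L' ⟶ L) (pR : R ⟶ R') (iR : R' ⟶ R)
    (hiL : ∀ X, iL.app X ≫ pL.app X = 𝟙 (L'.obj X)) (Y : B) :
    (auxUnit L R L' R' adj iL iR).app (R.obj Y) ≫
      R.map ((auxCounit L R L' R' adj pL pR).app Y) = pR.app Y ≫ iR.app Y := by
  simp only [auxUnit_app, auxCounit_app, Functor.map_comp, Category.assoc]
  slice_lhs 3 4 => rw [← Functor.map_comp, hiL, CategoryTheory.Functor.map_id]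
  simp only [Category.id_comp, Category.comp_id, Category.assoc]
  slice_lhs 2 3 => rw [show iR.app (L'.obj (R.obj Y)) ≫ R.map (L'.map (pR.app Y)) =
      R'.map (L'.map (pR.app Y)) ≫ iR.app (L'.obj (R'.obj Y)) from (iR.naturality _).symm]
  slice_lhs 1 2 => rw [show adj.unit.app (R.obj Y) ≫ R'.map (L'.map (pR.app Y)) =
      pR.app Y ≫ adj.unit.app (R'.obj Y) from by simpa using (adj.unit.naturality (pR.app Y)).symm]
  slice_lhs 3 4 => rw [show iR.app (L'.obj (R'.obj Y)) ≫ R.map (adj.counit.app Y) =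
      R'.map (adj.counit.app Y) ≫ iR.app Y from (iR.naturality _).symm]
  slice_lhs 2 3 => rw [adj.right_triangle_components]
  simp

theorem auxE1 (L' : A ⥤ B) (R' : B ⥤ A)
    (adj : L' ⊣ R') (pL : L ⟶ L') (iL : L' ⟶ L) (iR : R' ⟶ R)
    (hiL : ∀ X, iL.app X ≫ pL.app X = 𝟙 (L'.obj X)) (X : A) :
    (auxUnit L R L' R' adj iL iR).app X ≫ R.map (pL.app X ≫ iL.app X) =
      (auxUnit L R L' R' adj iL iR).app X := by
  simp only [auxUnit_app, Category.assoc, ← Functor.map_comp]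
  rw [reassoc_of% (hiL X)]

theorem auxE2 (L' : A ⥤ B) (R' : B ⥤ A)
    (adj : L' ⊣ R') (pL : L ⟶ L') (pR : R ⟶ R') (iR : R' ⟶ R)
    (hiR : ∀ Y, iR.app Y ≫ pR.app Y = 𝟙 (R'.obj Y)) (Y : B) :
    L.map (pR.app Y ≫ iR.app Y) ≫ (auxCounit L R L' R' adj pL pR).app Y =
      (auxCounit L R L' R' adj pL pR).app Y := by
  simp only [auxCounit_app]
  rw [pL.naturality_assoc]
  simp only [← Functor.map_comp_assoc]
  rw [Category.assoc, hiR, Category.comp_id]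

theorem betaAlpha_eq (η : 𝟭 A ⟶ L ⋙ R) (ε : R ⋙ L ⟶ 𝟭 B) {X : A} {Y : B} (f : L.obj X ⟶ Y) :
    pairingBeta L R ε (pairingAlpha L R η f) = (L.map (η.app X) ≫ ε.app (L.obj X)) ≫ f := by
  simp only [pairingAlpha, pairingBeta, Functor.map_comp, Category.assoc]
  rw [show L.map (R.map f) ≫ ε.app Y = ε.app (L.obj X) ≫ f from by simpa using ε.naturality f]

theorem alphaBeta_eq (η : 𝟭 A ⟶ L ⋙ R) (ε : R ⋙ L ⟶ 𝟭 B) {X : A} {Y : B} (g : X ⟶ R.obj Y) :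
    pairingAlpha L R η (pairingBeta L R ε g) = g ≫ η.app (R.obj Y) ≫ R.map (ε.app Y) := by
  simp only [pairingAlpha, pairingBeta, Functor.map_comp, Category.assoc]
  rw [reassoc_of% (show g ≫ η.app (R.obj Y) = η.app X ≫ R.map (L.map g) from by
    simpa using η.naturality g)]

theorem pairingAlphaT_eq (ηt : 𝟭 B ⟶ R ⋙ L) {Y : B} {X : A} (f : R.obj Y ⟶ X) :
    pairingAlphaT L R ηt f = pairingAlpha R L ηt f := rfl

theorem pairingBetaT_eq (εt : L ⋙ R ⟶ 𝟭 A) {Y : B} {X : A} (g : Y ⟶ L.obj X) :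
    pairingBetaT L R εt g = pairingBeta R L εt g := rfl

/-- `(L, R)` admits regular pairings in both directions with splitting
idempotents satisfying `ℓ = ℓ̃`, `r = r̃` iff there are retractions onto `L'`, `R'`
such that `(L', R')` is a Frobenius pair of functors. -/
theorem regular_pairings_both_split_iff_frobenius_retract :
    (∃ (η : 𝟭 A ⟶ L ⋙ R) (ε : R ⋙ L ⟶ 𝟭 B) (ηt : 𝟭 B ⟶ R ⋙ L) (εt : L ⋙ R ⟶ 𝟭 A),
      (∀ (X : A) (Y : B) (f : L.obj X ⟶ Y),
        pairingAlpha L R η (pairingBeta L R ε (pairingAlpha L R η f)) = pairingAlpha L R η f) ∧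
      (∀ (X : A) (Y : B) (g : X ⟶ R.obj Y),
        pairingBeta L R ε (pairingAlpha L R η (pairingBeta L R ε g)) = pairingBeta L R ε g) ∧
      (∀ (Y : B) (X : A) (f : R.obj Y ⟶ X),
        pairingAlphaT L R ηt (pairingBetaT L R εt (pairingAlphaT L R ηt f))
          = pairingAlphaT L R ηt f) ∧
      (∀ (Y : B) (X : A) (g : Y ⟶ L.obj X),
        pairingBetaT L R εt (pairingAlphaT L R ηt (pairingBetaT L R εt g))
          = pairingBetaT L R εt g) ∧
      (∀ X : A, pairingEll L R η ε X = pairingEllT L R ηt εt X) ∧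
      (∀ Y : B, pairingR L R η ε Y = pairingRT L R ηt εt Y) ∧
      (∃ (L' : A ⥤ B) (pL : L ⟶ L') (iL : L' ⟶ L),
        (∀ X : A, pL.app X ≫ iL.app X = pairingEll L R η ε X) ∧
        (∀ X : A, iL.app X ≫ pL.app X = 𝟙 (L'.obj X))) ∧
      (∃ (R' : B ⥤ A) (pR : R ⟶ R') (iR : R' ⟶ R),
        (∀ Y : B, pR.app Y ≫ iR.app Y = pairingR L R η ε Y) ∧
        (∀ Y : B, iR.app Y ≫ pR.app Y = 𝟙 (R'.obj Y))))
    ↔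
    (∃ (L' : A ⥤ B) (R' : B ⥤ A) (iL : L' ⟶ L) (pL : L ⟶ L')
        (iR : R' ⟶ R) (pR : R ⟶ R'),
      (∀ X : A, iL.app X ≫ pL.app X = 𝟙 (L'.obj X)) ∧
      (∀ Y : B, iR.app Y ≫ pR.app Y = 𝟙 (R'.obj Y)) ∧
      Nonempty (L' ⊣ R') ∧ Nonempty (R' ⊣ L')) := by
  constructor
  · rintro ⟨η, ε, ηt, εt, h1, h2, h3, h4, hl, hr,
      ⟨L', pL, iL, hpL, hiL⟩, ⟨R', pR, iR, hpR, hiR⟩⟩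
    refine ⟨L', R', iL, pL, iR, pR, hiL, hiR, ?_, ?_⟩
    · refine auxAdj L R η ε (fun X => ?_) (fun Y => ?_) L' pL iL (fun X => hpL X) hiL
        R' pR iR (fun Y => hpR Y) hiR
      · simpa [pairingAlpha, pairingBeta] using h1 X (L.obj X) (𝟙 (L.obj X))
      · simpa [pairingAlpha, pairingBeta] using h2 (R.obj Y) Y (𝟙 (R.obj Y))
    · refine auxAdj R L ηt εt (fun Y => ?_) (fun X => ?_) R' pR iR
        (fun Y => (hpR Y).trans (hr Y)) hiR L' pL iL (fun X => (hpL X).trans (hl X)) hiL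
      · simpa [pairingAlphaT, pairingBetaT] using h3 Y (R.obj Y) (𝟙 (R.obj Y))
      · simpa [pairingAlphaT, pairingBetaT] using h4 (L.obj X) X (𝟙 (L.obj X))
  · rintro ⟨L', R', iL, pL, iR, pR, hiL, hiR, ⟨adj⟩, ⟨adj'⟩⟩
    refine ⟨auxUnit L R L' R' adj iL iR, auxCounit L R L' R' adj pL pR,
      auxUnit R L R' L' adj' iR iL, auxCounit R L R' L' adj' pR pL,
      fun X Y f => ?_, fun X Y g => ?_, fun Y X f => ?_, fun Y X g => ?_,
      fun X => ?_, fun Y => ?_,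
      ⟨L', pL, iL, fun X => (auxEll L R L' R' adj pL iL pR iR hiR X).symm, hiL⟩,
      ⟨R', pR, iR, fun Y => (auxR L R L' R' adj pL iL pR iR hiL Y).symm, hiR⟩⟩
    · rw [betaAlpha_eq, auxEll L R L' R' adj pL iL pR iR hiR]
      simp only [pairingAlpha]
      rw [Functor.map_comp, reassoc_of% (auxE1 L R L' R' adj pL iL iR hiL X)]
    · rw [alphaBeta_eq, auxR L R L' R' adj pL iL pR iR hiL]
      simp only [pairingBeta]
      rw [Functor.map_comp, Category.assoc, auxE2 L R L' R' adj pL pR iR hiR Y]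
    · simp only [pairingAlphaT_eq, pairingBetaT_eq]
      rw [betaAlpha_eq, auxEll R L R' L' adj' pR iR pL iL hiL]
      simp only [pairingAlpha]
      rw [Functor.map_comp, reassoc_of% (auxE1 R L R' L' adj' pR iR iL hiR Y)]
    · simp only [pairingAlphaT_eq, pairingBetaT_eq]
      rw [alphaBeta_eq, auxR R L R' L' adj' pR iR pL iL hiR]
      simp only [pairingBeta]
      rw [Functor.map_comp, Category.assoc, auxE2 R L R' L' adj' pR pL iL hiL X]
    · exact (auxEll L R L' R' adj pL iL pR iR hiR X).trans
        (auxR R L R' L' adj' pR iR pL iL hiR X).symm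
    · exact (auxR L R L' R' adj pL iL pR iR hiL Y).trans
        (auxEll R L R' L' adj' pR iR pL iL hiL Y).symm

end
end

section
/- Let (L, R, α, β) be a regular pairing. Then the idempotent ℓr: LR → LR is a morphism of non-counital comonads (LR, LηR) → (LR, LηR) respecting the quasi-counit ε, i.e., LηR·ℓr = ℓrℓr·LηR and ε·ℓr = ε. -/
open CategoryTheory

universe v₁ u₁ v₂ u₂

section

variable {A : Type u₁} [Category.{v₁} A] {B : Type u₂} [Category.{v₂} B]
variable (L : A ⥤ B) (R : B ⥤ A)

/-- `ℓr : LR ⟶ LR` (componentwise). -/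
def ellR (η : 𝟭 A ⟶ L ⋙ R) (ε : R ⋙ L ⟶ 𝟭 B) (Y : B) :
    L.obj (R.obj Y) ⟶ L.obj (R.obj Y) :=
  L.map (pairingR L R η ε Y) ≫ pairingEll L R η ε (R.obj Y)

lemma pairing_ab (η : 𝟭 A ⟶ L ⋙ R) (ε : R ⋙ L ⟶ 𝟭 B) {X : A} {Y : B} (g : X ⟶ R.obj Y) :
    pairingAlpha L R η (pairingBeta L R ε g) = g ≫ pairingR L R η ε Y := by
  have h := η.naturality g
  simp only [Functor.id_map, Functor.comp_map] at h
  simp only [pairingAlpha, pairingBeta, pairingR, Functor.map_comp, ← Category.assoc, h]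

lemma pairing_ell_nat (η : 𝟭 A ⟶ L ⋙ R) (ε : R ⋙ L ⟶ 𝟭 B) {X X' : A} (g : X ⟶ X') :
    L.map g ≫ pairingEll L R η ε X' = pairingEll L R η ε X ≫ L.map g := by
  have h1 := η.naturality g
  simp only [Functor.id_map, Functor.comp_map] at h1
  have h2 := ε.naturality (L.map g)
  simp only [Functor.id_map, Functor.comp_map] at h2
  calc L.map g ≫ pairingEll L R η ε X'
      = L.map (g ≫ η.app X') ≫ ε.app (L.obj X') := by simp [pairingEll]
    _ = L.map (η.app X ≫ R.map (L.map g)) ≫ ε.app (L.obj X') := by rw [h1]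
    _ = L.map (η.app X) ≫ L.map (R.map (L.map g)) ≫ ε.app (L.obj X') := by
        simp [Functor.map_comp]
    _ = L.map (η.app X) ≫ ε.app (L.obj X) ≫ L.map g := by rw [h2]
    _ = pairingEll L R η ε X ≫ L.map g := by simp [pairingEll]

lemma pairing_alr (η : 𝟭 A ⟶ L ⋙ R) (ε : R ⋙ L ⟶ 𝟭 B) (Y : B) :
    pairingAlpha L R η (L.map (pairingR L R η ε Y))
      = pairingR L R η ε Y ≫ η.app (R.obj Y) := by
  have h := η.naturality (pairingR L R η ε Y)
  simp only [Functor.id_map, Functor.comp_map] at h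
  simp only [pairingAlpha, ← h]

lemma pairing_ellR_beta (η : 𝟭 A ⟶ L ⋙ R) (ε : R ⋙ L ⟶ 𝟭 B) (Y : B) :
    ellR L R η ε Y
      = pairingBeta L R ε (pairingR L R η ε Y ≫ η.app (R.obj Y)) := by
  simp [ellR, pairingEll, pairingBeta, Functor.map_comp]

/-- For a regular pairing, the idempotent `ℓr : LR ⟶ LR` is a
morphism of non-counital comonads `(LR, LηR) → (LR, LηR)` respecting the
quasi-counit `ε`: `LηR·ℓr = ℓrℓr·LηR` and `ε·ℓr = ε`. -/
theorem regular_pairing_ellR_comonad_morphism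
    (η : 𝟭 A ⟶ L ⋙ R) (ε : R ⋙ L ⟶ 𝟭 B)
    (regα : ∀ (X : A) (Y : B) (f : L.obj X ⟶ Y),
      pairingAlpha L R η (pairingBeta L R ε (pairingAlpha L R η f)) = pairingAlpha L R η f)
    (regβ : ∀ (X : A) (Y : B) (g : X ⟶ R.obj Y),
      pairingBeta L R ε (pairingAlpha L R η (pairingBeta L R ε g)) = pairingBeta L R ε g) :
    (∀ Y : B, ellR L R η ε Y ≫ L.map (η.app (R.obj Y))
        = L.map (η.app (R.obj Y)) ≫ L.map (R.map (ellR L R η ε Y)) ≫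
            ellR L R η ε (L.obj (R.obj Y))) ∧
    (∀ Y : B, ellR L R η ε Y ≫ ε.app Y = ε.app Y) := by
  constructor
  · intro Y
    set X₀ := R.obj Y with hX₀
    have key : pairingAlpha L R η (ellR L R η ε Y)
        = pairingR L R η ε Y ≫ η.app X₀ := by
      rw [pairing_ellR_beta, ← pairing_alr, regα, pairing_alr]
    have key2 : (pairingR L R η ε Y ≫ η.app X₀) ≫ pairingR L R η ε (L.obj X₀)
        = pairingR L R η ε Y ≫ η.app X₀ := by
      rw [← pairing_alr, ← pairing_ab, regα, pairing_alr]
    calc ellR L R η ε Y ≫ L.map (η.app X₀)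
        = L.map (pairingR L R η ε Y) ≫ pairingEll L R η ε X₀ ≫ L.map (η.app X₀) := by
          simp [ellR]
          rfl
      _ = L.map (pairingR L R η ε Y) ≫ L.map (η.app X₀)
            ≫ pairingEll L R η ε (R.obj (L.obj X₀)) := by
          rw [← pairing_ell_nat]; rfl
      _ = L.map (pairingR L R η ε Y ≫ η.app X₀)
            ≫ pairingEll L R η ε (R.obj (L.obj X₀)) := by
          simp
      _ = L.map ((pairingR L R η ε Y ≫ η.app X₀) ≫ pairingR L R η ε (L.obj X₀))
            ≫ pairingEll L R η ε (R.obj (L.obj X₀)) := by rw [key2]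
      _ = L.map (pairingAlpha L R η (ellR L R η ε Y) ≫ pairingR L R η ε (L.obj X₀))
            ≫ pairingEll L R η ε (R.obj (L.obj X₀)) := by rw [key]
      _ = L.map (η.app X₀) ≫ L.map (R.map (ellR L R η ε Y)) ≫ ellR L R η ε (L.obj X₀) := by
          simp [pairingAlpha, ellR, Functor.map_comp, Category.assoc]
          rfl
  · intro Y
    have hr : pairingAlpha L R η (ε.app Y) = pairingR L R η ε Y := rfl
    have h1 : pairingBeta L R ε (𝟙 (R.obj Y)) = ε.app Y := by
      simp [pairingBeta]
    have hrr : pairingR L R η ε Y ≫ pairingR L R η ε Y = pairingR L R η ε Y := by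
      have h := regα (R.obj Y) Y (pairingBeta L R ε (𝟙 (R.obj Y)))
      rw [h1, hr, pairing_ab] at h
      exact h
    have hbr : pairingBeta L R ε (pairingR L R η ε Y) = ε.app Y := by
      have h := regβ (R.obj Y) Y (𝟙 (R.obj Y))
      rw [h1, hr] at h
      exact h
    have hnat := ε.naturality (ε.app Y)
    simp only [Functor.id_map, Functor.comp_map, Functor.comp_obj, Functor.id_obj] at hnat
    calc ellR L R η ε Y ≫ ε.app Y
        = L.map (pairingR L R η ε Y) ≫ L.map (η.app (R.obj Y))
            ≫ ε.app (L.obj (R.obj Y)) ≫ ε.app Y := by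
          simp [ellR, pairingEll]
      _ = L.map (pairingR L R η ε Y) ≫ L.map (η.app (R.obj Y))
            ≫ L.map (R.map (ε.app Y)) ≫ ε.app Y := by rw [hnat]
      _ = L.map (pairingR L R η ε Y ≫ pairingR L R η ε Y) ≫ ε.app Y := by
          simp [pairingR, Functor.map_comp, Category.assoc]
      _ = L.map (pairingR L R η ε Y) ≫ ε.app Y := by rw [hrr]
      _ = ε.app Y := hbr

end
end
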